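/- Every countable subset of H(ω*), the group of self-homeomorphisms of ω* = βω \ ω with the compact-open topology, is closed and discrete in H(ω*). -/

import Mathlib

open Set Topology TopologicalSpace

/-- The compact-open topology on the group of self-homeomorphisms of a space:
the topology induced from the compact-open topology on `C(X, X)`. -/
instance homeomorphCompactOpen (X : Type*) [TopologicalSpace X] :
    TopologicalSpace (X ≃ₜ X) :=
  TopologicalSpace.induced (fun h : X ≃ₜ X => (h : C(X, X))) ContinuousMap.compactOpen

/-- The group of self-homeomorphisms of a space, under composition. -/
instance homeomorphGroup (X : Type*) [TopologicalSpace X] : Group (X ≃ₜ X) where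
  mul f g := g.trans f
  one := Homeomorph.refl X
  inv := Homeomorph.symm
  mul_assoc _ _ _ := Homeomorph.ext fun _ => rfl
  one_mul _ := Homeomorph.ext fun _ => rfl
  mul_one _ := Homeomorph.ext fun _ => rfl
  inv_mul_cancel f := Homeomorph.ext fun x => f.symm_apply_apply x

/-- The weight of a topological space: the least cardinality of a base of its topology. -/
noncomputable def TopologicalSpace.weight (X : Type u) [TopologicalSpace X] : Cardinal.{u} :=
  ⨅ B : {B : Set (Set X) // TopologicalSpace.IsTopologicalBasis B}, Cardinal.mk B.1

/-- A set is an Fσ-set if it is a countable union of closed sets. -/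
def IsFsigma {X : Type*} [TopologicalSpace X] (s : Set X) : Prop :=
  ∃ F : ℕ → Set X, (∀ n, IsClosed (F n)) ∧ s = ⋃ n, F n

/-- An F-space (for normal spaces): disjoint open Fσ-sets have disjoint closures. -/
def IsFSpace (X : Type*) [TopologicalSpace X] : Prop :=
  ∀ U V : Set X, IsOpen U → IsOpen V → IsFsigma U → IsFsigma V → Disjoint U V →
    Disjoint (closure U) (closure V)

/-- A Parovičenko space: a compact zero-dimensional F-space of weight `𝔠` in which
every nonempty Gδ-set has infinite interior. -/
structure IsParovicenko (X : Type u) [TopologicalSpace X] : Prop where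
  compact : CompactSpace X
  t2 : T2Space X
  zeroDim : TopologicalSpace.IsTopologicalBasis {s : Set X | IsClopen s}
  fSpace : IsFSpace X
  weight_eq : TopologicalSpace.weight X = Cardinal.continuum
  gdelta_int : ∀ s : Set X, IsGδ s → s.Nonempty → (interior s).Infinite

/-- The Gδ-modification of a topology: the topology generated by the Gδ-sets. -/
def gdeltaMod {X : Type*} (t : TopologicalSpace X) : TopologicalSpace X :=
  TopologicalSpace.generateFrom {s : Set X | @IsGδ X t s}

/-- The Čech–Stone remainder `βα \ α` of a space `α`. -/
abbrev CechStoneRemainder (α : Type u) [TopologicalSpace α] : Type u :=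
  {p : StoneCech α // p ∉ Set.range (stoneCechUnit : α → StoneCech α)}

/-- `ω* = βω \ ω`, the Čech–Stone remainder of the countable discrete space `ω`. -/
abbrev OmegaStar : Type := CechStoneRemainder ℕ

open scoped Classical

namespace OSaux

/-- indicator into Icc 0 1 -/
noncomputable def ind (A : Set ℕ) : ℕ → (Set.Icc (0:ℝ) 1) := fun n =>
  if n ∈ A then ⟨1, by norm_num⟩ else ⟨0, by norm_num⟩

lemma ind_cont (A : Set ℕ) : Continuous (ind A) := continuous_of_discreteTopology

/-- the extension of the indicator of `A` to `βℕ`, as a real-valued function -/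
noncomputable def g (A : Set ℕ) : StoneCech ℕ → ℝ := fun p =>
  ((stoneCechExtend (ind_cont A) p : Set.Icc (0:ℝ) 1) : ℝ)

lemma g_cont (A : Set ℕ) : Continuous (g A) :=
  continuous_subtype_val.comp (continuous_stoneCechExtend _)

lemma g_unit (A : Set ℕ) (n : ℕ) : g A (stoneCechUnit n) = if n ∈ A then 1 else 0 := by
  have h := congrFun (stoneCechExtend_extends (ind_cont A)) n
  simp only [Function.comp_apply] at h
  simp only [g, h, ind]
  split <;> rfl

lemma g_mem (A : Set ℕ) (p : StoneCech ℕ) : g A p = 0 ∨ g A p = 1 := by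
  have hcl : IsClosed {p : StoneCech ℕ | g A p = 0 ∨ g A p = 1} := by
    have : {p : StoneCech ℕ | g A p = 0 ∨ g A p = 1} = g A ⁻¹' ({0, 1} : Set ℝ) := by
      ext q; simp [Set.mem_preimage]
    rw [this]
    exact ((Set.finite_singleton (1:ℝ)).insert 0).isClosed.preimage (g_cont A)
  have hd : Dense {p : StoneCech ℕ | g A p = 0 ∨ g A p = 1} := by
    apply Dense.mono _ (denseRange_stoneCechUnit (α := ℕ))
    rintro _ ⟨n, rfl⟩
    rw [Set.mem_setOf_eq, g_unit]
    split <;> simp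
  have := hcl.closure_eq ▸ hd.closure_eq
  exact (this ▸ Set.mem_univ p : p ∈ {p : StoneCech ℕ | g A p = 0 ∨ g A p = 1})

/-- equality of continuous real functions on βℕ from equality on units -/
lemma g_ext {f₁ f₂ : StoneCech ℕ → ℝ} (h₁ : Continuous f₁) (h₂ : Continuous f₂)
    (h : ∀ n, f₁ (stoneCechUnit n) = f₂ (stoneCechUnit n)) : f₁ = f₂ :=
  stoneCech_hom_ext h₁ h₂ (funext h)

lemma g_inter (A B : Set ℕ) : g (A ∩ B) = fun p => g A p * g B p := by
  apply g_ext (g_cont _) ((g_cont A).mul (g_cont B))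
  intro n
  simp only [g_unit]
  by_cases hA : n ∈ A <;> by_cases hB : n ∈ B <;> simp [hA, hB, g_unit]

/-- the "star" of A : the basic clopen subset of βℕ determined by A. -/
noncomputable def star (A : Set ℕ) : Set (StoneCech ℕ) := g A ⁻¹' {1}

lemma isClosed_star (A : Set ℕ) : IsClosed (star A) :=
  (isClosed_singleton).preimage (g_cont A)

lemma isOpen_star (A : Set ℕ) : IsOpen (star A) := by
  have : star A = g A ⁻¹' (Set.Ioi (1/2 : ℝ)) := by
    ext p
    rcases g_mem A p with h | h <;>
      simp [star, Set.mem_preimage, h] <;> norm_num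
  rw [this]
  exact isOpen_Ioi.preimage (g_cont A)

lemma isClopen_star (A : Set ℕ) : IsClopen (star A) := ⟨isClosed_star A, isOpen_star A⟩

lemma unit_mem_star_iff (A : Set ℕ) (n : ℕ) : stoneCechUnit n ∈ star A ↔ n ∈ A := by
  simp only [star, Set.mem_preimage, Set.mem_singleton_iff, g_unit]
  split <;> simp_all

lemma star_eq_closure (A : Set ℕ) : star A = closure (stoneCechUnit '' A) := by
  apply Set.Subset.antisymm
  · intro p hp
    rw [mem_closure_iff]
    intro O hO hpO
    have h2 : IsOpen (O ∩ star A) := hO.inter (isOpen_star A)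
    have h3 : (O ∩ star A).Nonempty := ⟨p, hpO, hp⟩
    obtain ⟨n, hq⟩ := denseRange_stoneCechUnit.exists_mem_open h2 h3
    exact ⟨stoneCechUnit n, hq.1, ⟨n, (unit_mem_star_iff A n).mp hq.2, rfl⟩⟩
  · apply closure_minimal _ (isClosed_star A)
    rintro _ ⟨n, hn, rfl⟩
    exact (unit_mem_star_iff A n).mpr hn

lemma star_inter (A B : Set ℕ) : star (A ∩ B) = star A ∩ star B := by
  ext p
  simp only [star, Set.mem_preimage, Set.mem_singleton_iff, Set.mem_inter_iff]
  rw [show g (A ∩ B) p = g A p * g B p from congrFun (g_inter A B) p]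
  rcases g_mem A p with h | h <;> rcases g_mem B p with h' | h' <;>
    simp [h, h']

lemma star_union (A B : Set ℕ) : star (A ∪ B) = star A ∪ star B := by
  simp only [star_eq_closure, Set.image_union, closure_union]

lemma star_empty : star (∅ : Set ℕ) = ∅ := by
  simp [star_eq_closure]

lemma star_mono {A B : Set ℕ} (h : A ⊆ B) : star A ⊆ star B := by
  simp only [star_eq_closure]
  exact closure_mono (Set.image_mono  h)

lemma unit_injective : Function.Injective (stoneCechUnit : ℕ → StoneCech ℕ) := by
  intro n m h
  have h1 := (unit_mem_star_iff {n} n).mpr rfl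
  rw [h] at h1
  exact ((unit_mem_star_iff {n} m).mp h1).symm

lemma star_finite {A : Set ℕ} (hA : A.Finite) : star A = stoneCechUnit '' A := by
  rw [star_eq_closure]
  exact (hA.image _).isClosed.closure_eq

lemma isOpen_range_unit : IsOpen (Set.range (stoneCechUnit : ℕ → StoneCech ℕ)) := by
  have : Set.range (stoneCechUnit : ℕ → StoneCech ℕ) = ⋃ n, star {n} := by
    ext p
    simp only [Set.mem_range, Set.mem_iUnion]
    constructor
    · rintro ⟨n, rfl⟩; exact ⟨n, (unit_mem_star_iff {n} n).mpr rfl⟩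
    · rintro ⟨n, hn⟩
      rw [star_finite (Set.finite_singleton n)] at hn
      obtain ⟨m, hm, rfl⟩ := hn
      exact ⟨m, rfl⟩
  rw [this]
  exact isOpen_iUnion fun n => isOpen_star _

end OSaux
namespace OSaux

abbrev Om : Type := {p : StoneCech ℕ // p ∉ Set.range (stoneCechUnit : ℕ → StoneCech ℕ)}

lemma isClosed_Om : IsClosed {p : StoneCech ℕ | p ∉ Set.range (stoneCechUnit : ℕ → StoneCech ℕ)} := by
  have : {p : StoneCech ℕ | p ∉ Set.range (stoneCechUnit : ℕ → StoneCech ℕ)}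
      = (Set.range (stoneCechUnit : ℕ → StoneCech ℕ))ᶜ := rfl
  rw [this]
  exact isOpen_range_unit.isClosed_compl

instance : CompactSpace Om :=
  isCompact_iff_compactSpace.mp isClosed_Om.isCompact

noncomputable def ostar (A : Set ℕ) : Set Om := Subtype.val ⁻¹' star A

lemma isClopen_ostar (A : Set ℕ) : IsClopen (ostar A) :=
  (isClopen_star A).preimage continuous_subtype_val

lemma ostar_inter (A B : Set ℕ) : ostar (A ∩ B) = ostar A ∩ ostar B := by
  simp [ostar, star_inter A B]

lemma ostar_union (A B : Set ℕ) : ostar (A ∪ B) = ostar A ∪ ostar B := by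
  simp [ostar, star_union A B]

lemma ostar_empty : ostar (∅ : Set ℕ) = ∅ := by
  simp [ostar, star_empty]

lemma ostar_mono {A B : Set ℕ} (h : A ⊆ B) : ostar A ⊆ ostar B :=
  Set.preimage_mono (star_mono h)

lemma ostar_empty_of_finite {A : Set ℕ} (hA : A.Finite) : ostar A = ∅ := by
  ext p
  simp only [ostar, Set.mem_preimage, Set.mem_empty_iff_false, iff_false]
  intro hp
  rw [star_finite hA] at hp
  obtain ⟨n, _, hn⟩ := hp
  exact p.2 ⟨n, hn⟩

lemma ostar_nonempty {A : Set ℕ} (hA : A.Infinite) : (ostar A).Nonempty := by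
  by_contra h
  rw [Set.not_nonempty_iff_eq_empty] at h
  have hsub : star A ⊆ Set.range (stoneCechUnit : ℕ → StoneCech ℕ) := by
    intro q hq
    by_contra hq'
    exact Set.eq_empty_iff_forall_notMem.mp h ⟨q, hq'⟩ hq
  have hcpt : IsCompact (star A) := (isClosed_star A).isCompact
  have hcov : star A ⊆ ⋃ n : ℕ, star {n} := by
    intro q hq
    obtain ⟨n, rfl⟩ := hsub hq
    exact Set.mem_iUnion.mpr ⟨n, (unit_mem_star_iff {n} n).mpr rfl⟩
  obtain ⟨t, ht⟩ := hcpt.elim_finite_subcover (fun n : ℕ => star {n})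
    (fun n => isOpen_star _) hcov
  have hfin : (star A).Finite := by
    apply Set.Finite.subset _ ht
    apply Set.Finite.biUnion t.finite_toSet
    intro n _
    rw [star_finite (Set.finite_singleton n)]
    exact (Set.finite_singleton n).image _
  have : (stoneCechUnit '' A).Infinite := hA.image (Set.injOn_of_injective unit_injective)
  exact this (hfin.subset (by rw [star_eq_closure]; exact subset_closure))

lemma infinite_of_ostar_nonempty {A : Set ℕ} (h : (ostar A).Nonempty) : A.Infinite := by
  by_contra hfin
  rw [Set.not_infinite] at hfin
  rw [ostar_empty_of_finite hfin] at h
  exact Set.not_nonempty_empty h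

lemma ostar_eq_empty_iff {A : Set ℕ} : ostar A = ∅ ↔ A.Finite := by
  constructor
  · intro h
    by_contra hfin
    obtain ⟨p, hp⟩ := ostar_nonempty hfin
    rw [h] at hp
    exact hp
  · exact ostar_empty_of_finite

lemma ostar_almost_subset {A C : Set ℕ} (h : (A \ C).Finite) : ostar A ⊆ ostar C := by
  have : A ⊆ C ∪ (A \ C) := fun x hx => by
    by_cases hc : x ∈ C
    · exact Or.inl hc
    · exact Or.inr ⟨hx, hc⟩
  refine (ostar_mono this).trans ?_
  rw [ostar_union, ostar_empty_of_finite h]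
  simp

lemma disjoint_ostar_of_finite_inter {A B : Set ℕ} (h : (A ∩ B).Finite) :
    Disjoint (ostar A) (ostar B) := by
  rw [Set.disjoint_iff_inter_eq_empty, ← ostar_inter]
  exact ostar_empty_of_finite h

lemma finite_inter_of_disjoint_ostar {A B : Set ℕ} (h : Disjoint (ostar A) (ostar B)) :
    (A ∩ B).Finite := by
  by_contra hinf
  obtain ⟨p, hp⟩ := ostar_nonempty hinf
  rw [ostar_inter] at hp
  exact Set.disjoint_iff.mp h hp

/-- basic clopen neighborhoods in `ω*` -/
lemma exists_ostar_nbhd {O : Set Om} (hO : IsOpen O) {p : Om} (hp : p ∈ O) :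
    ∃ A : Set ℕ, A.Infinite ∧ p ∈ ostar A ∧ ostar A ⊆ O := by
  obtain ⟨U, hU, hUO⟩ := isOpen_induced_iff.mp hO
  have hpU : (p : StoneCech ℕ) ∈ U := by rw [← hUO] at hp; exact hp
  -- Urysohn
  have hdisj : Disjoint ({(p : StoneCech ℕ)} : Set (StoneCech ℕ)) Uᶜ := by
    rw [Set.disjoint_iff]
    rintro q ⟨hq1, hq2⟩
    rw [Set.mem_singleton_iff] at hq1
    subst hq1
    exact hq2 hpU
  obtain ⟨f, hf0, hf1, hf01⟩ := exists_continuous_zero_one_of_isClosed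
    isClosed_singleton hU.isClosed_compl hdisj
  set A : Set ℕ := {n | f (stoneCechUnit n) < 1/2} with hA
  have hstar_sub : star A ⊆ U := by
    rw [star_eq_closure]
    have h1 : stoneCechUnit '' A ⊆ f ⁻¹' (Set.Iic (1/2 : ℝ)) := by
      rintro _ ⟨n, hn, rfl⟩
      simp only [Set.mem_preimage, Set.mem_Iic]
      exact le_of_lt hn
    have h2 : closure (stoneCechUnit '' A) ⊆ f ⁻¹' (Set.Iic (1/2 : ℝ)) :=
      closure_minimal h1 (isClosed_Iic.preimage f.continuous)
    refine h2.trans ?_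
    intro q hq
    by_contra hqU
    have := hf1 hqU
    simp only [Pi.one_apply] at this
    rw [Set.mem_preimage, Set.mem_Iic, this] at hq
    norm_num at hq
  have hpA : (p : StoneCech ℕ) ∈ star A := by
    rw [star_eq_closure, mem_closure_iff]
    intro O' hO' hpO'
    have hfp : f (p : StoneCech ℕ) = 0 := hf0 rfl
    have hopen : IsOpen (O' ∩ f ⁻¹' (Set.Iio (1/2 : ℝ))) :=
      hO'.inter (isOpen_Iio.preimage f.continuous)
    have hne : (O' ∩ f ⁻¹' (Set.Iio (1/2 : ℝ))).Nonempty :=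
      ⟨p, hpO', by rw [Set.mem_preimage, Set.mem_Iio, hfp]; norm_num⟩
    obtain ⟨n, hn⟩ := denseRange_stoneCechUnit.exists_mem_open hopen hne
    exact ⟨stoneCechUnit n, hn.1, ⟨n, hn.2, rfl⟩⟩
  refine ⟨A, ?_, hpA, ?_⟩
  · exact infinite_of_ostar_nonempty ⟨p, hpA⟩
  · intro q hq
    rw [← hUO]
    exact hstar_sub hq

lemma ostar_biUnion {ι : Type*} (t : Finset ι) (F : ι → Set ℕ) :
    ostar (⋃ i ∈ t, F i) = ⋃ i ∈ t, ostar (F i) := by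
  classical
  induction t using Finset.induction_on with
  | empty => simp [ostar_empty]
  | insert _ _ hni ih =>
      rw [Finset.set_biUnion_insert, ostar_union, ih, Finset.set_biUnion_insert]

/-- every nonempty clopen subset of ω* is a star set with infinite support -/
lemma exists_rep {C : Set Om} (hC : IsClopen C) (hne : C.Nonempty) :
    ∃ A : Set ℕ, A.Infinite ∧ C = ostar A := by
  have hcpt : IsCompact C := hC.isClosed.isCompact
  have hchoice : ∀ x : C, ∃ A : Set ℕ, A.Infinite ∧ (x : Om) ∈ ostar A ∧ ostar A ⊆ C :=
    fun x => exists_ostar_nbhd hC.isOpen x.2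
  choose F hFinf hFmem hFsub using hchoice
  obtain ⟨t, ht⟩ := hcpt.elim_finite_subcover (fun x : C => ostar (F x))
    (fun x => (isClopen_ostar _).isOpen) (fun x hx => Set.mem_iUnion.mpr ⟨⟨x, hx⟩, hFmem ⟨x, hx⟩⟩)
  refine ⟨⋃ i ∈ t, F i, ?_, ?_⟩
  · obtain ⟨x, hx⟩ := hne
    apply infinite_of_ostar_nonempty
    rw [ostar_biUnion]
    exact ⟨x, ht hx⟩
  · apply Set.Subset.antisymm
    · intro x hx
      rw [ostar_biUnion]
      exact ht hx
    · rw [ostar_biUnion]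
      exact Set.iUnion₂_subset fun i _ => hFsub i

end OSaux
namespace OSaux

/-- split an infinite set of naturals into two infinite pieces -/
lemma exists_split {A : Set ℕ} (hA : A.Infinite) :
    ∃ B, B ⊆ A ∧ B.Infinite ∧ (A \ B).Infinite := by
  have e := hA.natEmbedding
  refine ⟨Set.range (fun k => ((e (2 * k) : A) : ℕ)), ?_, ?_, ?_⟩
  · rintro _ ⟨k, rfl⟩; exact (e (2 * k)).2
  · apply Set.infinite_range_of_injective
    intro a b hab
    have := e.injective (Subtype.ext hab)
    omega
  · apply Set.Infinite.mono (s := Set.range (fun k => ((e (2 * k + 1) : A) : ℕ)))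
    · rintro _ ⟨k, rfl⟩
      refine ⟨(e (2 * k + 1)).2, ?_⟩
      rintro ⟨j, hj⟩
      have := e.injective (Subtype.ext hj)
      omega
    · apply Set.infinite_range_of_injective
      intro a b hab
      have := e.injective (Subtype.ext hab)
      omega

/-- shrink an infinite set so its ostar avoids a given point -/
lemma exists_avoid {A : Set ℕ} (hA : A.Infinite) (q : Om) :
    ∃ B, B ⊆ A ∧ B.Infinite ∧ q ∉ ostar B := by
  obtain ⟨B, hBA, hBinf, hABinf⟩ := exists_split hA
  by_cases hq : q ∈ ostar B
  · refine ⟨A \ B, Set.diff_subset, hABinf, ?_⟩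
    intro hq'
    have : q ∈ ostar (B ∩ (A \ B)) := by rw [ostar_inter]; exact ⟨hq, hq'⟩
    rw [show B ∩ (A \ B) = ∅ by ext x; simp (config := {contextual := true}) [Set.mem_diff],
      ostar_empty] at this
    exact this
  · exact ⟨B, hBA, hBinf, hq⟩

/-- pseudo-intersection of a decreasing sequence of infinite sets -/
lemma exists_pseudo_intersection (S : ℕ → Set ℕ) (hinf : ∀ n, (S n).Infinite)
    (hdec : ∀ n, S (n + 1) ⊆ S n) :
    ∃ R : Set ℕ, R.Infinite ∧ ∀ n, (R \ S n).Finite := by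
  have hanti : ∀ {m n}, n ≤ m → S m ⊆ S n := by
    intro m n h
    induction h with
    | refl => exact fun x hx => hx
    | step h ih => exact fun x hx => ih (hdec _ hx)
  -- build a strictly monotone selector
  have hstep : ∀ (n : ℕ) (b : ℕ), ∃ m ∈ S n, b < m := fun n b => (hinf n).exists_gt b
  choose pick hpick1 hpick2 using hstep
  let φ : ℕ → ℕ := fun n => Nat.rec (pick 0 0) (fun k ih => pick (k + 1) ih) n
  have hφS : ∀ n, φ n ∈ S n := by
    intro n
    cases n with
    | zero => exact hpick1 0 0
    | succ k => exact hpick1 (k + 1) _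
  have hφmono : StrictMono φ := by
    apply strictMono_nat_of_lt_succ
    intro n
    exact hpick2 (n + 1) (φ n)
  refine ⟨Set.range φ, Set.infinite_range_of_injective hφmono.injective, ?_⟩
  intro n
  apply Set.Finite.subset (Set.finite_Iio (φ n))
  rintro _ ⟨⟨m, rfl⟩, hm⟩
  rw [Set.mem_Iio]
  rcases lt_or_ge m n with h | h
  · exact hφmono h
  · exact absurd (hanti h (hφS m)) hm

/-- almost-disjoint separation: if all `R n ∩ Y m` are finite, there is a single
set `C` almost containing all `R n` and almost disjoint from all `Y m`. -/
lemma exists_ad_separation (R Y : ℕ → Set ℕ) (h : ∀ n m, (R n ∩ Y m).Finite) :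
    ∃ C : Set ℕ, (∀ n, (R n \ C).Finite) ∧ (∀ m, (C ∩ Y m).Finite) := by
  refine ⟨⋃ n, ((⋃ k ≤ n, R k) \ (⋃ k ≤ n, Y k)), ?_, ?_⟩
  · intro n
    apply Set.Finite.subset (Set.Finite.biUnion (Set.finite_Iic n) (fun k _ => h n k))
    intro x hx
    obtain ⟨hx1, hx2⟩ := hx
    have : x ∈ ⋃ k ≤ n, Y k := by
      by_contra hY
      exact hx2 (Set.mem_iUnion.mpr ⟨n, ⟨Set.mem_iUnion.mpr ⟨n, Set.mem_iUnion.mpr ⟨le_refl n, hx1⟩⟩, hY⟩⟩)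
    obtain ⟨k, hk, hxk⟩ := Set.mem_iUnion₂.mp this
    exact Set.mem_iUnion₂.mpr ⟨k, hk, hx1, hxk⟩
  · intro m
    apply Set.Finite.subset (Set.Finite.biUnion (Set.finite_Iio m) (fun k _ => h k m))
    intro x hx
    obtain ⟨hx1, hx2⟩ := hx
    obtain ⟨n, hn⟩ := Set.mem_iUnion.mp hx1
    obtain ⟨hnR, hnY⟩ := hn
    obtain ⟨k, hk, hxk⟩ := Set.mem_iUnion₂.mp hnR
    have hkm : k < m := by
      by_contra hge
      push_neg at hge
      exact hnY (Set.mem_iUnion₂.mpr ⟨m, le_trans hge hk, hx2⟩)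
    exact Set.mem_iUnion₂.mpr ⟨k, hkm, hxk, hx2⟩

/-- image of a clopen set under a homeomorphism of ω* is clopen -/
lemma isClopen_image (h : Om ≃ₜ Om) {C : Set Om} (hC : IsClopen C) : IsClopen (h '' C) := by
  have : ⇑h '' C = ⇑h.symm ⁻¹' C := by
    ext x
    constructor
    · rintro ⟨y, hy, rfl⟩
      simpa using hy
    · intro hx
      exact ⟨h.symm x, hx, by simp⟩
  rw [this]
  exact hC.preimage h.symm.continuous

end OSaux
namespace OSaux

variable (f : Om ≃ₜ Om) (g : ℕ → Om ≃ₜ Om)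

/-- the invariant for the recursive construction -/
def P (n : ℕ) (D : ℕ → Set ℕ) : Prop :=
  (∀ k ≤ n, (D k).Infinite) ∧
  (∀ k ≤ n, ∀ l ≤ n, Disjoint (f '' ostar (D k)) (g l '' ostar (D l)))

/-- the seed lemma: produce a nonempty clopen set whose images under `f` and `gg`
are disjoint from each other and from the given clopen sets `M`, `N`. -/
lemma exists_seed (gg : Om ≃ₜ Om) {x : Om} (hx : f x ≠ gg x)
    {M N : Set Om} (hM : IsClopen M) (hN : IsClopen N) (hxM : f x ∉ M) (hxN : gg x ∉ N) :
    ∃ A : Set ℕ, A.Infinite ∧ Disjoint (f '' ostar A) (gg '' ostar A) ∧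
      Disjoint (f '' ostar A) M ∧ Disjoint (gg '' ostar A) N := by
  have hO₁ : IsOpen (Mᶜ ∩ ({gg x} : Set Om)ᶜ) :=
    (hM.isClosed.isOpen_compl).inter (isClosed_singleton.isOpen_compl)
  have hfxO₁ : f x ∈ Mᶜ ∩ ({gg x} : Set Om)ᶜ := ⟨hxM, by simpa using hx⟩
  obtain ⟨Pa, _, hfxP, hPsub⟩ := exists_ostar_nbhd hO₁ hfxO₁
  have hO₂ : IsOpen (Nᶜ ∩ (ostar Pa)ᶜ) :=
    (hN.isClosed.isOpen_compl).inter ((isClopen_ostar Pa).isClosed.isOpen_compl)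
  have hgxO₂ : gg x ∈ Nᶜ ∩ (ostar Pa)ᶜ := by
    refine ⟨hxN, fun hmem => ?_⟩
    exact (hPsub hmem).2 rfl
  obtain ⟨Qa, _, hgxQ, hQsub⟩ := exists_ostar_nbhd hO₂ hgxO₂
  set C : Set Om := f ⁻¹' (ostar Pa) ∩ gg ⁻¹' (ostar Qa) with hC
  have hCclopen : IsClopen C :=
    ((isClopen_ostar Pa).preimage f.continuous).inter
      ((isClopen_ostar Qa).preimage gg.continuous)
  have hxC : x ∈ C := ⟨hfxP, hgxQ⟩
  obtain ⟨A, hAinf, hArep⟩ := exists_rep hCclopen ⟨x, hxC⟩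
  have hfC : f '' ostar A ⊆ ostar Pa := by
    rw [← hArep]; rintro _ ⟨y, hy, rfl⟩; exact hy.1
  have hgC : gg '' ostar A ⊆ ostar Qa := by
    rw [← hArep]; rintro _ ⟨y, hy, rfl⟩; exact hy.2
  refine ⟨A, hAinf, ?_, ?_, ?_⟩
  · refine Set.disjoint_left.mpr fun z hz1 hz2 => ?_
    exact (hQsub (hgC hz2)).2 (hfC hz1)
  · exact Set.disjoint_left.mpr fun z hz1 hz2 => (hPsub (hfC hz1)).1 hz2
  · exact Set.disjoint_left.mpr fun z hz1 hz2 => (hQsub (hgC hz1)).1 hz2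

lemma exists_point_ne {f₁ f₂ : Om ≃ₜ Om} (h : f₂ ≠ f₁) : ∃ x, f₁ x ≠ f₂ x := by
  by_contra hc
  push_neg at hc
  exact h (Homeomorph.ext fun x => (hc x).symm)

/-- base case -/
lemma base (hg : g 0 ≠ f) : ∃ D : ℕ → Set ℕ, P f g 0 D := by
  obtain ⟨x, hx⟩ := exists_point_ne hg
  obtain ⟨A, hAinf, hdisj, -, -⟩ := exists_seed f (g 0) hx isClopen_empty isClopen_empty
    (Set.notMem_empty _) (Set.notMem_empty _)
  refine ⟨fun _ => A, fun k _ => hAinf, fun k hk l hl => ?_⟩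
  interval_cases k
  interval_cases l
  exact hdisj

/-- inductive step -/
lemma step (n : ℕ) (D : ℕ → Set ℕ) (hD : P f g n D) (hg : g (n + 1) ≠ f) :
    ∃ D' : ℕ → Set ℕ, P f g (n + 1) D' ∧ ∀ k ≤ n, D' k ⊆ D k := by
  obtain ⟨x, hx⟩ := exists_point_ne hg
  -- shrink the earlier sets to avoid the two relevant points
  have hsh : ∀ k, ∃ B : Set ℕ, B ⊆ D k ∧
      (k ≤ n → (B.Infinite ∧ (g k).symm (f x) ∉ ostar B ∧ f.symm (g (n + 1) x) ∉ ostar B)) := by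
    intro k
    by_cases hk : k ≤ n
    · obtain ⟨B₁, hB₁sub, hB₁inf, hq₁⟩ := exists_avoid (hD.1 k hk) ((g k).symm (f x))
      obtain ⟨B₂, hB₂sub, hB₂inf, hq₂⟩ := exists_avoid hB₁inf (f.symm (g (n + 1) x))
      exact ⟨B₂, hB₂sub.trans hB₁sub,
        fun _ => ⟨hB₂inf, fun hmem => hq₁ (ostar_mono hB₂sub hmem), hq₂⟩⟩
    · exact ⟨D k, subset_rfl, fun h => absurd h hk⟩
  choose E hEsub hEprop using hsh
  set M : Set Om := ⋃ k ∈ Set.Iic n, (g k) '' ostar (E k) with hM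
  set N : Set Om := ⋃ k ∈ Set.Iic n, f '' ostar (E k) with hN
  have hMclopen : IsClopen M :=
    (Set.finite_Iic n).isClopen_biUnion fun k _ => isClopen_image (g k) (isClopen_ostar _)
  have hNclopen : IsClopen N :=
    (Set.finite_Iic n).isClopen_biUnion fun k _ => isClopen_image f (isClopen_ostar _)
  have hfxM : f x ∉ M := by
    intro hmem
    obtain ⟨k, hk, hk2⟩ := Set.mem_iUnion₂.mp hmem
    obtain ⟨y, hy, hyx⟩ := hk2
    have heq : (g k).symm (f x) = y := by rw [← hyx]; exact (g k).symm_apply_apply y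
    exact ((hEprop k hk).2).1 (heq ▸ hy)
  have hgxN : g (n + 1) x ∉ N := by
    intro hmem
    obtain ⟨k, hk, hk2⟩ := Set.mem_iUnion₂.mp hmem
    obtain ⟨y, hy, hyx⟩ := hk2
    have heq : f.symm (g (n + 1) x) = y := by rw [← hyx]; exact f.symm_apply_apply y
    exact ((hEprop k hk).2).2 (heq ▸ hy)
  obtain ⟨A, hAinf, hAdisj, hAM, hAN⟩ :=
    exists_seed f (g (n + 1)) hx hMclopen hNclopen hfxM hgxN
  classical
  refine ⟨fun k => if k = n + 1 then A else E k, ⟨?_, ?_⟩, ?_⟩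
  · intro k hk
    by_cases h : k = n + 1
    · simpa [h] using hAinf
    · have hk' : k ≤ n := by omega
      simpa [h] using ((hEprop k hk').1)
  · intro k hk l hl
    by_cases hkn : k = n + 1 <;> by_cases hln : l = n + 1
    · simpa [hkn, hln] using hAdisj
    · have hl' : l ≤ n := by omega
      simp only [hkn, hln, if_true, if_false, if_pos rfl, if_neg hln]
      refine Set.disjoint_left.mpr fun z hz1 hz2 => ?_
      exact Set.disjoint_left.mp hAM hz1
        (Set.mem_biUnion hl' hz2)
    · have hk' : k ≤ n := by omega
      simp only [hkn, hln, if_neg hkn, if_pos rfl]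
      refine Set.disjoint_left.mpr fun z hz1 hz2 => ?_
      exact Set.disjoint_left.mp hAN hz2 (Set.mem_biUnion hk' hz1)
    · have hk' : k ≤ n := by omega
      have hl' : l ≤ n := by omega
      simp only [if_neg hkn, if_neg hln]
      exact (hD.2 k hk' l hl').mono (Set.image_mono  (ostar_mono (hEsub k)))
        (Set.image_mono  (ostar_mono (hEsub l)))
  · intro k hk
    have : k ≠ n + 1 := by omega
    simp only [if_neg this]
    exact hEsub k

end OSaux
namespace OSaux

variable (f : Om ≃ₜ Om) (g : ℕ → Om ≃ₜ Om)

noncomputable def chain (hg : ∀ n, g n ≠ f) : ∀ n : ℕ, {D : ℕ → Set ℕ // P f g n D}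
  | 0 => ⟨(base f g (hg 0)).choose, (base f g (hg 0)).choose_spec⟩
  | n + 1 => ⟨(step f g n (chain hg n).1 (chain hg n).2 (hg (n + 1))).choose,
      (step f g n (chain hg n).1 (chain hg n).2 (hg (n + 1))).choose_spec.1⟩

lemma chain_subset (hg : ∀ n, g n ≠ f) (n k : ℕ) (hk : k ≤ n) :
    (chain f g hg (n + 1)).1 k ⊆ (chain f g hg n).1 k :=
  (step f g n (chain f g hg n).1 (chain f g hg n).2 (hg (n + 1))).choose_spec.2 k hk

/-- The main lemma: a single point of `H(ω*)` can be separated from a sequence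
of other points by one open set. -/
lemma main_lemma (hg : ∀ n, g n ≠ f) :
    ∃ N : Set (Om ≃ₜ Om), IsOpen N ∧ f ∈ N ∧ ∀ n, g n ∉ N := by
  set E : ℕ → ℕ → Set ℕ := fun n => (chain f g hg n).1 with hE
  have hP : ∀ n, P f g n (E n) := fun n => (chain f g hg n).2
  have hEsub : ∀ n k, k ≤ n → E (n + 1) k ⊆ E n k := fun n k hk => chain_subset f g hg n k hk
  -- pseudo-intersections
  have hpi : ∀ k : ℕ, ∃ R : Set ℕ, R.Infinite ∧ ∀ i, (R \ E (k + i) k).Finite := by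
    intro k
    apply exists_pseudo_intersection (fun i => E (k + i) k)
    · intro i
      exact (hP (k + i)).1 k (Nat.le_add_right k i)
    · intro i
      exact hEsub (k + i) k (Nat.le_add_right k i)
  choose R hRinf hRfin using hpi
  have hRsub : ∀ k n, k ≤ n → ostar (R k) ⊆ ostar (E n k) := by
    intro k n hk
    have := hRfin k (n - k)
    rw [Nat.add_sub_cancel' hk] at this
    exact ostar_almost_subset this
  have hdisj : ∀ k l, Disjoint (f '' ostar (R k)) ((g l) '' ostar (R l)) := by
    intro k l
    have h1 := hRsub k (max k l) (le_max_left k l)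
    have h2 := hRsub l (max k l) (le_max_right k l)
    exact ((hP (max k l)).2 k (le_max_left k l) l (le_max_right k l)).mono
      (Set.image_mono  h1) (Set.image_mono  h2)
  -- representatives for the images
  have hrepU : ∀ k, ∃ A : Set ℕ, A.Infinite ∧ f '' ostar (R k) = ostar A := by
    intro k
    exact exists_rep (isClopen_image f (isClopen_ostar _))
      ((ostar_nonempty (hRinf k)).image f)
  have hrepV : ∀ l, ∃ B : Set ℕ, B.Infinite ∧ (g l) '' ostar (R l) = ostar B := by
    intro l
    exact exists_rep (isClopen_image (g l) (isClopen_ostar _))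
      ((ostar_nonempty (hRinf l)).image (g l))
  choose A hAinf hArep using hrepU
  choose B hBinf hBrep using hrepV
  have hADfin : ∀ k l, (A k ∩ B l).Finite := by
    intro k l
    apply finite_inter_of_disjoint_ostar
    rw [← hArep, ← hBrep]
    exact hdisj k l
  obtain ⟨C, hC1, hC2⟩ := exists_ad_separation A B hADfin
  set K : Set Om := ostar C with hK
  have hKclopen : IsClopen K := isClopen_ostar C
  have hUK : ∀ k, f '' ostar (R k) ⊆ K := by
    intro k
    rw [hArep]
    exact ostar_almost_subset (hC1 k)
  have hVK : ∀ l, Disjoint K ((g l) '' ostar (R l)) := by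
    intro l
    rw [hBrep]
    exact disjoint_ostar_of_finite_inter (hC2 l)
  set Kc : Set Om := f ⁻¹' K with hKc
  have hKcCompact : IsCompact Kc :=
    (hKclopen.isClosed.preimage f.continuous).isCompact
  refine ⟨(fun G : Om ≃ₜ Om => (G : C(Om, Om))) ⁻¹' {F : C(Om, Om) | Set.MapsTo F Kc K},
    ?_, ?_, ?_⟩
  · exact isOpen_induced (ContinuousMap.isOpen_setOf_mapsTo hKcCompact hKclopen.isOpen)
  · intro z hz
    exact hz
  · intro n hmem
    obtain ⟨p, hp⟩ := ostar_nonempty (hRinf n)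
    have hpKc : p ∈ Kc := hUK n ⟨p, hp, rfl⟩
    have : (g n) p ∈ K := hmem hpKc
    exact Set.disjoint_left.mp (hVK n) this ⟨p, hp, rfl⟩

end OSaux
/-- Every countable subset of `H(ω*)` is closed and discrete. -/
theorem countable_subsets_homeoOmegaStar_closed_discrete
    (A : Set (OmegaStar ≃ₜ OmegaStar)) (hA : A.Countable) :
    IsClosed A ∧
    ∀ f ∈ A, ∃ U : Set (OmegaStar ≃ₜ OmegaStar), IsOpen U ∧ U ∩ A = {f} := by
  constructor
  · rw [← isOpen_compl_iff, isOpen_iff_forall_mem_open]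
    intro f hf
    rcases Set.eq_empty_or_nonempty A with rfl | hne
    · exact ⟨Set.univ, fun z _ hz => hz, isOpen_univ, trivial⟩
    · obtain ⟨g, hg⟩ := hA.exists_eq_range hne
      have hgne : ∀ n, g n ≠ f := by
        intro n h
        exact hf (by rw [hg]; exact ⟨n, h⟩)
      obtain ⟨N, hNopen, hfN, hgN⟩ := OSaux.main_lemma f g hgne
      refine ⟨N, ?_, hNopen, hfN⟩
      intro z hz hzA
      rw [hg] at hzA
      obtain ⟨n, rfl⟩ := hzA
      exact hgN n hz
  · intro f hf
    by_cases hD : (A \ {f}).Nonempty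
    · obtain ⟨g, hg⟩ := (hA.mono Set.diff_subset).exists_eq_range hD
      have hgne : ∀ n, g n ≠ f := by
        intro n h
        have hmem : g n ∈ A \ {f} := by rw [hg]; exact ⟨n, rfl⟩
        exact hmem.2 h
      obtain ⟨N, hNopen, hfN, hgN⟩ := OSaux.main_lemma f g hgne
      refine ⟨N, hNopen, Set.Subset.antisymm ?_ ?_⟩
      · rintro z ⟨hzN, hzA⟩
        by_contra hzf
        have hmem : z ∈ A \ {f} := ⟨hzA, hzf⟩
        rw [hg] at hmem
        obtain ⟨n, rfl⟩ := hmem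
        exact hgN n hzN
      · rintro z rfl
        exact ⟨hfN, hf⟩
    · refine ⟨Set.univ, isOpen_univ, ?_⟩
      rw [Set.univ_inter, Set.not_nonempty_iff_eq_empty, Set.diff_eq_empty] at *
      exact Set.Subset.antisymm hD (by rintro z rfl; exact hf)
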